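/- arXiv:2405.08738 — 2 statements merged into one kernel-verified Lean document; each statement's English description precedes it below -/
import Mathlib

section
/- Under the conditions of the previous Leibniz-rule lemma, and with θ in the interior of the support of Y so that both E[(Y−θ)1(Y>θ)] and E[(θ−Y)1(θ>Y)] are positive, the function t(θ) = E[(Y−θ)1(Y>θ) | A=1, X=x] / E[(θ−Y)1(θ>Y) | A=1, X=x] is differentiable with strictly negative derivative: t'(θ) = −[E[(θ−Y)1(θ>Y)]·P(Y>θ) + E[(Y−θ)1(Y>θ)]·P(Y≤θ)] / [E[(θ−Y)1(θ>Y)]]², where all expectations and probabilities condition on A = 1, X = x. Consequently t(θ) is strictly decreasing and, by the inverse function theorem, its inverse θ(t) is differentiable with ∂θ/∂t = −f₁(θ)² / g₁(θ), where f₁(θ) = E[(θ−Y)1(θ>Y)] and g₁(θ) = f₁(θ)·P(Y>θ) + E[(Y−θ)1(Y>θ)]·P(Y<θ). -/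
open MeasureTheory

open scoped ENNReal NNReal

private lemma aux_conv (p : ℝ → ℝ) (hp_nonneg : ∀ y, 0 ≤ p y) (hp_cont : Continuous p)
    (s : Set ℝ) (hs : MeasurableSet s) (g : ℝ → ℝ) :
    ∫ y in s, g y ∂(volume.withDensity (fun y => ENNReal.ofReal (p y)))
      = ∫ y in s, p y * g y := by
  have hm : Measurable fun y => (p y).toNNReal :=
    (continuous_real_toNNReal.comp hp_cont).measurable
  have h : (fun y : ℝ => ENNReal.ofReal (p y)) = fun y => ((p y).toNNReal : ℝ≥0∞) := rfl
  rw [h, setIntegral_withDensity_eq_setIntegral_smul hm g hs]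
  refine setIntegral_congr_fun hs fun y _ => ?_
  simp [NNReal.smul_def, Real.coe_toNNReal _ (hp_nonneg y)]

private lemma aux_ioi (f : ℝ → ℝ) (B₂ : ℝ) (h0 : ∀ y, B₂ < y → f y = 0)
    (hint : Integrable f) (ϑ : ℝ) (hϑ : ϑ ≤ B₂ + 1) :
    ∫ y in Set.Ioi ϑ, f y = ∫ y in ϑ..(B₂+1), f y := by
  have h2 : ∫ y in Set.Ioi (B₂+1), f y = 0 :=
    setIntegral_eq_zero_of_forall_eq_zero fun y hy =>
      h0 y (by simpa using lt_of_lt_of_le (by linarith) (le_of_lt hy))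
  rw [intervalIntegral.integral_of_le hϑ, ← Set.Ioc_union_Ioi_eq_Ioi hϑ,
    setIntegral_union (Set.Ioc_disjoint_Ioi le_rfl) measurableSet_Ioi
      hint.integrableOn hint.integrableOn, h2, add_zero]

private lemma aux_iio (f : ℝ → ℝ) (B₁ : ℝ) (h0 : ∀ y, y < B₁ → f y = 0)
    (hint : Integrable f) (ϑ : ℝ) (hϑ : B₁ - 1 ≤ ϑ) :
    ∫ y in Set.Iio ϑ, f y = ∫ y in (B₁-1)..ϑ, f y := by
  have h2 : ∫ y in Set.Iio (B₁-1), f y = 0 :=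
    setIntegral_eq_zero_of_forall_eq_zero fun y hy => h0 y (by simp at hy; linarith)
  have h3 : ∫ y in Set.Ico (B₁-1) ϑ, f y = ∫ y in Set.Ioc (B₁-1) ϑ, f y :=
    setIntegral_congr_set Ico_ae_eq_Ioc
  rw [intervalIntegral.integral_of_le hϑ, ← Set.Iio_union_Ico_eq_Iio hϑ,
    setIntegral_union ((Set.Iio_disjoint_Ici le_rfl).mono_right Set.Ico_subset_Ici_self)
      measurableSet_Ico hint.integrableOn hint.integrableOn, h2, zero_add, h3]

/-- Under the Leibniz-rule conditions, with `θ` such that both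
truncated means are positive, `t(θ) = E[(Y-θ)1(Y>θ)] / E[(θ-Y)1(θ>Y)]` is
differentiable with strictly negative derivative
`t'(θ) = -[E[(θ-Y)1(θ>Y)]·P(Y>θ) + E[(Y-θ)1(Y>θ)]·P(Y≤θ)] / E[(θ-Y)1(θ>Y)]²`,
hence strictly decreasing near `θ`, and by the inverse function theorem any
local inverse `Θ` is differentiable at `t(θ)` with derivative
`-f₁(θ)² / g₁(θ)` where `f₁(θ) = E[(θ-Y)1(θ>Y)]` and
`g₁(θ) = f₁(θ)·P(Y>θ) + E[(Y-θ)1(Y>θ)]·P(Y<θ)`. -/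
theorem derivative_of_t_and_its_inverse
    (ν : Measure ℝ) [IsProbabilityMeasure ν]
    (p : ℝ → ℝ) (hp_nonneg : ∀ y, 0 ≤ p y)
    (hdens : ν = volume.withDensity (fun y => ENNReal.ofReal (p y)))
    (hp_cont : Continuous p) (hp_bdd : ∃ C, ∀ y, p y ≤ C)
    (B₁ B₂ : ℝ) (hsupp : ∀ y, y ∉ Set.Icc B₁ B₂ → p y = 0)
    (hnotpm : ∀ c : ℝ, ν ≠ Measure.dirac c)
    (θ : ℝ)
    (hposU : 0 < ∫ y in Set.Ioi θ, (y - θ) ∂ν)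
    (hposL : 0 < ∫ y in Set.Iio θ, (θ - y) ∂ν) :
    -- the function t(·) and auxiliary functionals
    (HasDerivAt
        (fun ϑ : ℝ => (∫ y in Set.Ioi ϑ, (y - ϑ) ∂ν) / (∫ y in Set.Iio ϑ, (ϑ - y) ∂ν))
        (-(((∫ y in Set.Iio θ, (θ - y) ∂ν) * (ν (Set.Ioi θ)).toReal
            + (∫ y in Set.Ioi θ, (y - θ) ∂ν) * (ν (Set.Iic θ)).toReal)
          / (∫ y in Set.Iio θ, (θ - y) ∂ν) ^ 2)) θ)
    ∧
    (-(((∫ y in Set.Iio θ, (θ - y) ∂ν) * (ν (Set.Ioi θ)).toReal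
        + (∫ y in Set.Ioi θ, (y - θ) ∂ν) * (ν (Set.Iic θ)).toReal)
      / (∫ y in Set.Iio θ, (θ - y) ∂ν) ^ 2) < 0)
    ∧
    -- inverse function theorem: any continuous local inverse Θ of t(·) is
    -- differentiable at t(θ) with derivative -f₁(θ)² / g₁(θ)
    (∀ Θ : ℝ → ℝ,
      ContinuousAt Θ
        ((∫ y in Set.Ioi θ, (y - θ) ∂ν) / (∫ y in Set.Iio θ, (θ - y) ∂ν)) →
      Θ ((∫ y in Set.Ioi θ, (y - θ) ∂ν) / (∫ y in Set.Iio θ, (θ - y) ∂ν)) = θ →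
      (∀ᶠ s in nhds ((∫ y in Set.Ioi θ, (y - θ) ∂ν) / (∫ y in Set.Iio θ, (θ - y) ∂ν)),
        (∫ y in Set.Ioi (Θ s), (y - Θ s) ∂ν) / (∫ y in Set.Iio (Θ s), (Θ s - y) ∂ν) = s) →
      HasDerivAt Θ
        (-((∫ y in Set.Iio θ, (θ - y) ∂ν) ^ 2
          / ((∫ y in Set.Iio θ, (θ - y) ∂ν) * (ν (Set.Ioi θ)).toReal
             + (∫ y in Set.Ioi θ, (y - θ) ∂ν) * (ν (Set.Iio θ)).toReal)))
        ((∫ y in Set.Ioi θ, (y - θ) ∂ν) / (∫ y in Set.Iio θ, (θ - y) ∂ν))) := by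
  -- notation
  set c : ℝ := B₂ + 1 with hc
  set d : ℝ := B₁ - 1 with hd
  -- basic integrability
  have hsupp' : ∀ f : ℝ → ℝ, (∀ y, y ∉ Set.Icc B₁ B₂ → f y = 0) → Continuous f → Integrable f := by
    intro f h0 hf
    exact hf.integrable_of_hasCompactSupport (HasCompactSupport.intro isCompact_Icc h0)
  have hp_int : Integrable p := hsupp' p hsupp hp_cont
  have hyp_cont : Continuous fun y : ℝ => y * p y := continuous_id.mul hp_cont
  have hyp_int : Integrable (fun y : ℝ => y * p y) :=
    hsupp' _ (fun y hy => by rw [hsupp y hy, mul_zero]) hyp_cont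
  have hyp0 : ∀ y, B₂ < y → y * p y = 0 := fun y hy => by
    rw [hsupp y (by simp [Set.mem_Icc]; intro; linarith), mul_zero]
  have hyp0' : ∀ y, y < B₁ → y * p y = 0 := fun y hy => by
    rw [hsupp y (by simp [Set.mem_Icc]; intro; linarith), mul_zero]
  have hp0 : ∀ y, B₂ < y → p y = 0 := fun y hy =>
    hsupp y (by simp [Set.mem_Icc]; intro; linarith)
  have hp0' : ∀ y, y < B₁ → p y = 0 := fun y hy =>
    hsupp y (by simp [Set.mem_Icc]; intro; linarith)
  -- vanishing of ν outside the support
  have hνIoi : ∀ ϑ : ℝ, B₂ ≤ ϑ → ν (Set.Ioi ϑ) = 0 := by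
    intro ϑ h
    rw [hdens, withDensity_apply _ measurableSet_Ioi]
    calc ∫⁻ y in Set.Ioi ϑ, ENNReal.ofReal (p y) = ∫⁻ _ in Set.Ioi ϑ, 0 :=
          setLIntegral_congr_fun measurableSet_Ioi (fun y hy => by
            show ENNReal.ofReal (p y) = 0
            rw [hp0 y (lt_of_le_of_lt h hy), ENNReal.ofReal_zero])
      _ = 0 := lintegral_zero
  have hνIio : ∀ ϑ : ℝ, ϑ ≤ B₁ → ν (Set.Iio ϑ) = 0 := by
    intro ϑ h
    rw [hdens, withDensity_apply _ measurableSet_Iio]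
    calc ∫⁻ y in Set.Iio ϑ, ENNReal.ofReal (p y) = ∫⁻ _ in Set.Iio ϑ, 0 :=
          setLIntegral_congr_fun measurableSet_Iio (fun y hy => by
            show ENNReal.ofReal (p y) = 0
            rw [hp0' y (lt_of_lt_of_le hy h), ENNReal.ofReal_zero])
      _ = 0 := lintegral_zero
  -- positivity of the tail masses
  have hUne : ν (Set.Ioi θ) ≠ 0 := by
    intro h
    rw [Measure.restrict_eq_zero.2 h, integral_zero_measure] at hposU
    exact lt_irrefl 0 hposU
  have hLne : ν (Set.Iio θ) ≠ 0 := by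
    intro h
    rw [Measure.restrict_eq_zero.2 h, integral_zero_measure] at hposL
    exact lt_irrefl 0 hposL
  have hθ₂ : θ ≤ B₂ := by by_contra h; exact hUne (hνIoi θ (le_of_lt (not_le.1 h)))
  have hθ₁ : B₁ ≤ θ := by by_contra h; exact hLne (hνIio θ (le_of_lt (not_le.1 h)))
  have hqpos : 0 < (ν (Set.Ioi θ)).toReal := ENNReal.toReal_pos hUne (measure_ne_top ν _)
  have hrpos : 0 < (ν (Set.Iio θ)).toReal := ENNReal.toReal_pos hLne (measure_ne_top ν _)
  -- no atom at θ
  have hIicIio : ν (Set.Iic θ) = ν (Set.Iio θ) := by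
    have hsing : ν {θ} = 0 := by
      rw [hdens, withDensity_apply _ (measurableSet_singleton θ)]
      exact setLIntegral_measure_zero _ _ (by simp)
    rw [← Set.Iio_union_right,
      measure_union (by simp) (measurableSet_singleton θ), hsing, add_zero]
  -- expressing masses as interval integrals of p
  have hνp : ∀ s : Set ℝ, MeasurableSet s → (ν s).toReal = ∫ y in s, p y := by
    intro s hs
    rw [hdens, withDensity_apply _ hs,
      ← ofReal_integral_eq_lintegral_ofReal hp_int.integrableOn
        (ae_of_all _ fun y => hp_nonneg y),
      ENNReal.toReal_ofReal (integral_nonneg fun y => hp_nonneg y)]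
  have hq : (ν (Set.Ioi θ)).toReal = ∫ y in θ..c, p y := by
    rw [hνp _ measurableSet_Ioi]; exact aux_ioi p B₂ hp0 hp_int θ (by linarith)
  have hr : (ν (Set.Iio θ)).toReal = ∫ y in d..θ, p y := by
    rw [hνp _ measurableSet_Iio]; exact aux_iio p B₁ hp0' hp_int θ (by linarith)
  -- the smooth representations of numerator and denominator
  have hUeq : ∀ ϑ ∈ Set.Ioo d c,
      (∫ y in Set.Ioi ϑ, (y - ϑ) ∂ν)
        = (∫ y in ϑ..c, y * p y) - ϑ * ∫ y in ϑ..c, p y := by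
    intro ϑ hϑ
    rw [hdens, aux_conv p hp_nonneg hp_cont _ measurableSet_Ioi]
    calc ∫ y in Set.Ioi ϑ, p y * (y - ϑ)
        = ∫ y in Set.Ioi ϑ, (y * p y - ϑ * p y) :=
          setIntegral_congr_fun measurableSet_Ioi fun y _ => by ring
      _ = (∫ y in Set.Ioi ϑ, y * p y) - ∫ y in Set.Ioi ϑ, ϑ * p y :=
          integral_sub hyp_int.integrableOn (hp_int.const_mul ϑ).integrableOn
      _ = (∫ y in Set.Ioi ϑ, y * p y) - ϑ * ∫ y in Set.Ioi ϑ, p y := by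
          rw [integral_const_mul]
      _ = (∫ y in ϑ..c, y * p y) - ϑ * ∫ y in ϑ..c, p y := by
          rw [aux_ioi _ B₂ hyp0 hyp_int ϑ (le_of_lt hϑ.2),
            aux_ioi p B₂ hp0 hp_int ϑ (le_of_lt hϑ.2)]
  have hLeq : ∀ ϑ ∈ Set.Ioo d c,
      (∫ y in Set.Iio ϑ, (ϑ - y) ∂ν)
        = ϑ * (∫ y in d..ϑ, p y) - ∫ y in d..ϑ, y * p y := by
    intro ϑ hϑ
    rw [hdens, aux_conv p hp_nonneg hp_cont _ measurableSet_Iio]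
    calc ∫ y in Set.Iio ϑ, p y * (ϑ - y)
        = ∫ y in Set.Iio ϑ, (ϑ * p y - y * p y) :=
          setIntegral_congr_fun measurableSet_Iio fun y _ => by ring
      _ = (∫ y in Set.Iio ϑ, ϑ * p y) - ∫ y in Set.Iio ϑ, y * p y :=
          integral_sub (hp_int.const_mul ϑ).integrableOn hyp_int.integrableOn
      _ = ϑ * (∫ y in Set.Iio ϑ, p y) - ∫ y in Set.Iio ϑ, y * p y := by
          rw [integral_const_mul]
      _ = ϑ * (∫ y in d..ϑ, p y) - ∫ y in d..ϑ, y * p y := by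
          rw [aux_iio _ B₁ hyp0' hyp_int ϑ (le_of_lt hϑ.1),
            aux_iio p B₁ hp0' hp_int ϑ (le_of_lt hϑ.1)]
  have hθmem : θ ∈ Set.Ioo d c := ⟨by rw [hd]; linarith, by rw [hc]; linarith⟩
  -- derivative of the numerator representation
  have hd1 : HasDerivAt (fun ϑ => (∫ y in ϑ..c, y * p y) - ϑ * ∫ y in ϑ..c, p y)
      (-(ν (Set.Ioi θ)).toReal) θ := by
    have h1 : HasDerivAt (fun ϑ => ∫ y in ϑ..c, y * p y) (-(θ * p θ)) θ :=
      intervalIntegral.integral_hasDerivAt_left (hyp_cont.intervalIntegrable _ _)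
        hyp_cont.aestronglyMeasurable.stronglyMeasurableAtFilter hyp_cont.continuousAt
    have h2 : HasDerivAt (fun ϑ => ∫ y in ϑ..c, p y) (-(p θ)) θ :=
      intervalIntegral.integral_hasDerivAt_left (hp_cont.intervalIntegrable _ _)
        hp_cont.aestronglyMeasurable.stronglyMeasurableAtFilter hp_cont.continuousAt
    have h3 := (hasDerivAt_id θ).mul h2
    have h4 := h1.sub h3
    refine h4.congr_deriv ?_
    rw [hq]; simp
  -- derivative of the denominator representation
  have hd2 : HasDerivAt (fun ϑ => ϑ * (∫ y in d..ϑ, p y) - ∫ y in d..ϑ, y * p y)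
      ((ν (Set.Iio θ)).toReal) θ := by
    have h1 : HasDerivAt (fun ϑ => ∫ y in d..ϑ, y * p y) (θ * p θ) θ :=
      intervalIntegral.integral_hasDerivAt_right (hyp_cont.intervalIntegrable _ _)
        hyp_cont.aestronglyMeasurable.stronglyMeasurableAtFilter hyp_cont.continuousAt
    have h2 : HasDerivAt (fun ϑ => ∫ y in d..ϑ, p y) (p θ) θ :=
      intervalIntegral.integral_hasDerivAt_right (hp_cont.intervalIntegrable _ _)
        hp_cont.aestronglyMeasurable.stronglyMeasurableAtFilter hp_cont.continuousAt
    have h3 := (hasDerivAt_id θ).mul h2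
    have h4 := h3.sub h1
    refine h4.congr_deriv ?_
    rw [hr]; simp
  -- the quotient
  have hA2θ : (θ * (∫ y in d..θ, p y) - ∫ y in d..θ, y * p y)
      = ∫ y in Set.Iio θ, (θ - y) ∂ν := (hLeq θ hθmem).symm
  have hA2ne : (θ * (∫ y in d..θ, p y) - ∫ y in d..θ, y * p y) ≠ 0 := by
    rw [hA2θ]; exact ne_of_gt hposL
  have hdiv := hd1.div hd2 hA2ne
  -- the target derivative value
  have hmain1 : HasDerivAt
      (fun ϑ : ℝ => (∫ y in Set.Ioi ϑ, (y - ϑ) ∂ν) / (∫ y in Set.Iio ϑ, (ϑ - y) ∂ν))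
      (-(((∫ y in Set.Iio θ, (θ - y) ∂ν) * (ν (Set.Ioi θ)).toReal
          + (∫ y in Set.Ioi θ, (y - θ) ∂ν) * (ν (Set.Iic θ)).toReal)
        / (∫ y in Set.Iio θ, (θ - y) ∂ν) ^ 2)) θ := by
    have hev : (fun ϑ : ℝ => (∫ y in Set.Ioi ϑ, (y - ϑ) ∂ν) / (∫ y in Set.Iio ϑ, (ϑ - y) ∂ν))
        =ᶠ[nhds θ] (fun ϑ => ((∫ y in ϑ..c, y * p y) - ϑ * ∫ y in ϑ..c, p y)
          / (ϑ * (∫ y in d..ϑ, p y) - ∫ y in d..ϑ, y * p y)) := by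
      filter_upwards [Ioo_mem_nhds hθmem.1 hθmem.2] with ϑ hϑ
      rw [hUeq ϑ hϑ, hLeq ϑ hϑ]
    have h := hdiv.congr_of_eventuallyEq hev
    refine h.congr_deriv ?_
    rw [hIicIio, hUeq θ hθmem, hLeq θ hθmem]
    ring
  have hicio : (ν (Set.Iic θ)).toReal = (ν (Set.Iio θ)).toReal := by rw [hIicIio]
  have hNpos : 0 < (∫ y in Set.Iio θ, (θ - y) ∂ν) * (ν (Set.Ioi θ)).toReal
      + (∫ y in Set.Ioi θ, (y - θ) ∂ν) * (ν (Set.Iic θ)).toReal := by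
    rw [hicio]
    exact add_pos (mul_pos hposL hqpos) (mul_pos hposU hrpos)
  have hmain2 : (-(((∫ y in Set.Iio θ, (θ - y) ∂ν) * (ν (Set.Ioi θ)).toReal
        + (∫ y in Set.Ioi θ, (y - θ) ∂ν) * (ν (Set.Iic θ)).toReal)
      / (∫ y in Set.Iio θ, (θ - y) ∂ν) ^ 2) < 0) := by
    have : 0 < ((∫ y in Set.Iio θ, (θ - y) ∂ν) * (ν (Set.Ioi θ)).toReal
        + (∫ y in Set.Ioi θ, (y - θ) ∂ν) * (ν (Set.Iic θ)).toReal)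
        / (∫ y in Set.Iio θ, (θ - y) ∂ν) ^ 2 := div_pos hNpos (pow_pos hposL 2)
    linarith
  refine ⟨hmain1, hmain2, ?_⟩
  intro Θ hg hΘa hfg
  have hf : HasDerivAt
      (fun ϑ : ℝ => (∫ y in Set.Ioi ϑ, (y - ϑ) ∂ν) / (∫ y in Set.Iio ϑ, (ϑ - y) ∂ν))
      (-(((∫ y in Set.Iio θ, (θ - y) ∂ν) * (ν (Set.Ioi θ)).toReal
          + (∫ y in Set.Ioi θ, (y - θ) ∂ν) * (ν (Set.Iic θ)).toReal)
        / (∫ y in Set.Iio θ, (θ - y) ∂ν) ^ 2))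
      (Θ ((∫ y in Set.Ioi θ, (y - θ) ∂ν) / (∫ y in Set.Iio θ, (θ - y) ∂ν))) := by
    rw [hΘa]; exact hmain1
  have h := HasDerivAt.of_local_left_inverse hg hf (ne_of_lt hmain2) hfg
  refine h.congr_deriv ?_
  rw [← hicio, inv_neg, inv_div]
end

section
/- In the data generating process X ~ Uniform(−1,1), W ~ Uniform(−1,1) independent, A | X, W ~ Bernoulli((X + W + 2)/4), Y = X + W + ε with ε ~ N(0,1) independent noise, the unadjusted mean difference ψ_∅ = E(Y | A=1) − E(Y | A=0) equals 2/3. Consequently, with ψ_X = (log 3)/3, the interval [ψ_X − |ψ_X − ψ_∅|, ψ_X + |ψ_X − ψ_∅|] ≈ [0.066, 0.667] does not contain the true ATE ψ* = 0. -/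
open MeasureTheory ProbabilityTheory

lemma gauss01_integrable_id : Integrable (id : ℝ → ℝ) (gaussianReal 0 1) := by
  rw [gaussianReal_of_var_ne_zero 0 one_ne_zero,
    integrable_withDensity_iff (measurable_gaussianPDF 0 1)
      (ae_of_all _ fun x => ENNReal.ofReal_lt_top)]
  have h : Integrable (fun x : ℝ => x * Real.exp (-(2⁻¹) * x ^ 2)) volume :=
    integrable_mul_exp_neg_mul_sq (by norm_num)
  have h2 := (h.const_mul ((Real.sqrt (2 * Real.pi))⁻¹))
  refine h2.congr (ae_of_all _ fun x => ?_)
  simp only [id_eq, gaussianPDF]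
  rw [ENNReal.toReal_ofReal (gaussianPDFReal_nonneg _ _ _)]
  simp only [gaussianPDFReal, NNReal.coe_one, mul_one, sub_zero]
  ring_nf

lemma gauss01_mean : ∫ x, x ∂(gaussianReal 0 1) = 0 := by
  have hmap : (gaussianReal 0 1).map (fun x : ℝ => -x) = gaussianReal 0 1 := by
    have h2 : ((fun x : ℝ => (-1) * x)) = (fun x : ℝ => -x) := by funext x; ring
    rw [← h2, gaussianReal_map_const_mul (μ := 0) (v := 1) (-1)]
    norm_num
  have key := integral_map (μ := gaussianReal 0 1) (φ := fun x : ℝ => -x)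
    measurable_neg.aemeasurable (f := fun x : ℝ => x) (by rw [hmap]; exact aestronglyMeasurable_id)
  rw [hmap] at key
  rw [integral_neg] at key
  linarith

/-- In the DGP of Statement 12, the unadjusted mean difference
`ψ_∅ = E(Y | A=1) - E(Y | A=0)` equals `2/3`; consequently, with
`ψ_X = (log 3)/3`, the interval `[ψ_X - |ψ_X - ψ_∅|, ψ_X + |ψ_X - ψ_∅|]`
does not contain the true ATE `ψ* = 0`. -/
theorem unadjusted_difference_and_failed_benchmarking
    {Ω : Type*} {mΩ : MeasurableSpace Ω} (P : Measure Ω) [IsProbabilityMeasure P]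
    (X W e A Y : Ω → ℝ)
    (hX : Measurable X) (hW : Measurable W) (he : Measurable e) (hA : Measurable A)
    (hXlaw : Measure.map X P = (2 : ENNReal)⁻¹ • volume.restrict (Set.Ioo (-1:ℝ) 1))
    (hWlaw : Measure.map W P = (2 : ENNReal)⁻¹ • volume.restrict (Set.Ioo (-1:ℝ) 1))
    (hXW : IndepFun X W P)
    (hA01 : ∀ ω, A ω = 0 ∨ A ω = 1)
    (hAcond : P[A | MeasurableSpace.comap (fun ω => (X ω, W ω)) inferInstance]
      =ᵐ[P] fun ω => (X ω + W ω + 2) / 4)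
    (helaw : Measure.map e P = gaussianReal 0 1)
    (heInd : IndepFun (fun ω => (X ω, W ω, A ω)) e P)
    (hY : ∀ ω, Y ω = X ω + W ω + e ω) :
    ((∫ ω, Y ω * A ω ∂P) / (∫ ω, A ω ∂P)
        - (∫ ω, Y ω * (1 - A ω) ∂P) / (∫ ω, (1 - A ω) ∂P) = 2 / 3) ∧
    ((0:ℝ) ∉ Set.Icc (Real.log 3 / 3 - |Real.log 3 / 3 - 2 / 3|)
        (Real.log 3 / 3 + |Real.log 3 / 3 - 2 / 3|)) := by
  constructor
  · -- a.e. bounds on X and W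
    have haeIoo : ∀ (Z : Ω → ℝ), Measurable Z →
        Measure.map Z P = (2 : ENNReal)⁻¹ • volume.restrict (Set.Ioo (-1:ℝ) 1) →
        ∀ᵐ ω ∂P, |Z ω| ≤ 1 := by
      intro Z hZ hZlaw
      have h0 : P (Z ⁻¹' (Set.Ioo (-1:ℝ) 1)ᶜ) = 0 := by
        rw [← Measure.map_apply hZ measurableSet_Ioo.compl, hZlaw]
        simp [Measure.restrict_apply measurableSet_Ioo.compl]
      have h1 : ∀ᵐ ω ∂P, Z ω ∈ Set.Ioo (-1:ℝ) 1 := by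
        rw [ae_iff]
        convert h0 using 2
        rfl
      filter_upwards [h1] with ω hω
      exact abs_le.2 ⟨hω.1.le, hω.2.le⟩
    have hXb := haeIoo X hX hXlaw
    have hWb := haeIoo W hW hWlaw
    have hAbs : ∀ ω, ‖A ω‖ ≤ 1 := fun ω => by rcases hA01 ω with h | h <;> simp [h]
    -- integrabilities
    have intX : Integrable X P := Integrable.mono' (integrable_const 1)
      hX.aestronglyMeasurable (hXb.mono fun ω h => by simpa [Real.norm_eq_abs] using h)
    have intW : Integrable W P := Integrable.mono' (integrable_const 1)
      hW.aestronglyMeasurable (hWb.mono fun ω h => by simpa [Real.norm_eq_abs] using h)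
    have intA : Integrable A P := Integrable.mono' (integrable_const 1)
      hA.aestronglyMeasurable (ae_of_all _ hAbs)
    have intX2 : Integrable (fun ω => (X ω)^2) P := Integrable.mono' (integrable_const 1)
      ((hX.pow_const 2).aestronglyMeasurable)
      (hXb.mono fun ω h => by
        rw [Real.norm_eq_abs, abs_pow]
        calc |X ω| ^ 2 ≤ 1 ^ 2 := pow_le_pow_left₀ (abs_nonneg _) h 2
        _ = 1 := one_pow 2)
    have intW2 : Integrable (fun ω => (W ω)^2) P := Integrable.mono' (integrable_const 1)
      ((hW.pow_const 2).aestronglyMeasurable)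
      (hWb.mono fun ω h => by
        rw [Real.norm_eq_abs, abs_pow]
        calc |W ω| ^ 2 ≤ 1 ^ 2 := pow_le_pow_left₀ (abs_nonneg _) h 2
        _ = 1 := one_pow 2)
    have intXW : Integrable (fun ω => X ω * W ω) P := Integrable.mono' (integrable_const 1)
      ((hX.mul hW).aestronglyMeasurable)
      ((hXb.and hWb).mono fun ω h => by
        rw [Real.norm_eq_abs, abs_mul]
        calc |X ω| * |W ω| ≤ 1 * 1 := mul_le_mul h.1 h.2 (abs_nonneg _) zero_le_one
        _ = 1 := one_mul 1)
    have intXWA : Integrable (fun ω => (X ω + W ω) * A ω) P :=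
      Integrable.mono' (integrable_const 2) (((hX.add hW).mul hA).aestronglyMeasurable)
        ((hXb.and hWb).mono fun ω h => by
          rw [Real.norm_eq_abs, abs_mul]
          calc |X ω + W ω| * |A ω| ≤ 2 * 1 := by
                refine mul_le_mul ((abs_add_le _ _).trans (by linarith [h.1, h.2])) (hAbs ω)
                  (abs_nonneg _) (by norm_num)
          _ = 2 := by norm_num)
    have intE : Integrable e P := by
      have h := gauss01_integrable_id
      rw [← helaw] at h
      exact (integrable_map_measure aestronglyMeasurable_id he.aemeasurable).mp h
    have intEA : Integrable (fun ω => e ω * A ω) P := by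
      have h := intE.bdd_mul hA.aestronglyMeasurable (ae_of_all _ hAbs)
      exact h.congr (ae_of_all _ fun ω => mul_comm (A ω) (e ω))
    have intY : Integrable Y P :=
      (((intX.add intW).add intE).congr (ae_of_all _ fun ω => (hY ω).symm))
    have intXpW : Integrable (fun ω => X ω + W ω) P := intX.add intW
    have intYA : Integrable (fun ω => Y ω * A ω) P := by
      have h := intXWA.add intEA
      refine h.congr (ae_of_all _ fun ω => ?_)
      show (X ω + W ω) * A ω + e ω * A ω = Y ω * A ω
      rw [hY ω]; ring
    -- moments via the uniform law
    have law_int : ∀ (Z : Ω → ℝ), Measurable Z →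
        Measure.map Z P = (2 : ENNReal)⁻¹ • volume.restrict (Set.Ioo (-1:ℝ) 1) →
        ∀ (g : ℝ → ℝ), Measurable g →
        ∫ ω, g (Z ω) ∂P = (2:ℝ)⁻¹ * ∫ x in Set.Ioo (-1:ℝ) 1, g x := by
      intro Z hZ hZlaw g hg
      rw [← integral_map hZ.aemeasurable hg.aestronglyMeasurable, hZlaw,
        integral_smul_measure]
      simp
    have I1 : ∫ x in Set.Ioo (-1:ℝ) 1, x = 0 := by
      rw [Measure.restrict_congr_set Ioo_ae_eq_Ioc,
        ← intervalIntegral.integral_of_le (by norm_num : (-1:ℝ) ≤ 1)]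
      simp [integral_id]
    have I2 : ∫ x in Set.Ioo (-1:ℝ) 1, x^2 = 2/3 := by
      rw [Measure.restrict_congr_set Ioo_ae_eq_Ioc,
        ← intervalIntegral.integral_of_le (by norm_num : (-1:ℝ) ≤ 1)]
      simp [integral_pow]
      norm_num
    have EX : ∫ ω, X ω ∂P = 0 := by
      have h := law_int X hX hXlaw (fun x => x) measurable_id
      simpa [I1] using h
    have EW : ∫ ω, W ω ∂P = 0 := by
      have h := law_int W hW hWlaw (fun x => x) measurable_id
      simpa [I1] using h
    have EX2 : ∫ ω, (X ω)^2 ∂P = 1/3 := by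
      have h := law_int X hX hXlaw (fun x => x^2) (measurable_id.pow_const 2)
      rw [h, I2]; norm_num
    have EW2 : ∫ ω, (W ω)^2 ∂P = 1/3 := by
      have h := law_int W hW hWlaw (fun x => x^2) (measurable_id.pow_const 2)
      rw [h, I2]; norm_num
    have EXW : ∫ ω, X ω * W ω ∂P = 0 := by
      have h := hXW.integral_mul_eq_mul_integral intX.aestronglyMeasurable intW.aestronglyMeasurable
      simpa [EX] using h
    have Ee : ∫ ω, e ω ∂P = 0 := by
      have h := integral_map (φ := e) he.aemeasurable (f := fun x : ℝ => x)
        (by rw [helaw]; exact aestronglyMeasurable_id)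
      rw [helaw, gauss01_mean] at h
      exact h.symm
    have hAe : IndepFun A e P :=
      heInd.comp (φ := fun p : ℝ × ℝ × ℝ => p.2.2) (measurable_snd.comp measurable_snd)
        measurable_id
    have EeA : ∫ ω, e ω * A ω ∂P = 0 := by
      have h := hAe.integral_mul_eq_mul_integral intA.aestronglyMeasurable intE.aestronglyMeasurable
      have h2 : ∫ ω, e ω * A ω ∂P = ∫ ω, (A * e) ω ∂P := by
        simp only [Pi.mul_apply]
        exact integral_congr_ae (ae_of_all _ fun ω => mul_comm (e ω) (A ω))
      rw [h2, h, Ee, mul_zero]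
    -- conditional expectation arguments
    set G := MeasurableSpace.comap (fun ω => (X ω, W ω)) inferInstance with hGdef
    have hGle : G ≤ mΩ := Measurable.comap_le (hX.prodMk hW)
    have hXWG : Measurable[G] fun ω => (X ω, W ω) := measurable_iff_comap_le.mpr le_rfl
    have hfG : StronglyMeasurable[G] (fun ω => X ω + W ω) :=
      ((measurable_fst.comp hXWG).add (measurable_snd.comp hXWG)).stronglyMeasurable
    have EA : ∫ ω, A ω ∂P = 1/2 := by
      rw [← integral_condExp hGle (f := A), integral_congr_ae hAcond]
      have : ∫ ω, (X ω + W ω + 2)/4 ∂P = ((∫ ω, X ω ∂P) + (∫ ω, W ω ∂P) + 2)/4 := by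
        rw [integral_div, integral_add intXpW (integrable_const 2),
          integral_add intX intW, integral_const]
        simp
      rw [this, EX, EW]; norm_num
    have EXWA : ∫ ω, (X ω + W ω) * A ω ∂P = 1/6 := by
      have hcm := condExp_mul_of_stronglyMeasurable_left (μ := P) (m := G) hfG
        (by exact intXWA) intA
      have hae2 : (fun ω => X ω + W ω) * P[A|G]
          =ᵐ[P] fun ω => (X ω + W ω) * ((X ω + W ω + 2)/4) := by
        filter_upwards [hAcond] with ω h
        simp [h]
      have e1 : ∫ ω, (X ω + W ω) * A ω ∂P
          = ∫ ω, (P[(fun ω => X ω + W ω) * A|G]) ω ∂P :=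
        (integral_condExp hGle).symm
      rw [e1, integral_congr_ae (hcm.trans hae2)]
      have expand : (fun ω => (X ω + W ω) * ((X ω + W ω + 2)/4))
          = fun ω => ((X ω)^2 + (W ω)^2 + 2*(X ω * W ω) + 2*(X ω) + 2*(W ω))/4 := by
        funext ω; ring
      rw [expand]
      have intS1 : Integrable (fun ω => (X ω)^2 + (W ω)^2) P := intX2.add intW2
      have intS2 : Integrable (fun ω => (X ω)^2 + (W ω)^2 + 2*(X ω * W ω)) P :=
        intS1.add (intXW.const_mul 2)
      have intS3 : Integrable (fun ω => (X ω)^2 + (W ω)^2 + 2*(X ω * W ω) + 2*(X ω)) P :=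
        intS2.add (intX.const_mul 2)
      rw [integral_div,
        integral_add intS3 (intW.const_mul 2),
        integral_add intS2 (intX.const_mul 2),
        integral_add intS1 (intXW.const_mul 2),
        integral_add intX2 intW2,
        integral_const_mul, integral_const_mul, integral_const_mul,
        EX2, EW2, EXW, EX, EW]
      norm_num
    -- the four integrals
    have EYA : ∫ ω, Y ω * A ω ∂P = 1/6 := by
      have h : (fun ω => Y ω * A ω) = fun ω => (X ω + W ω) * A ω + e ω * A ω := by
        funext ω; rw [hY ω]; ring
      rw [h, integral_add intXWA intEA, EXWA, EeA]; norm_num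
    have EY : ∫ ω, Y ω ∂P = 0 := by
      have h : ∫ ω, Y ω ∂P = ∫ ω, (X ω + W ω) + e ω ∂P :=
        integral_congr_ae (ae_of_all _ fun ω => by rw [hY ω])
      rw [h, integral_add intXpW intE, integral_add intX intW, EX, EW, Ee]
      norm_num
    have EY1A : ∫ ω, Y ω * (1 - A ω) ∂P = -(1/6) := by
      have h : (fun ω => Y ω * (1 - A ω)) = fun ω => Y ω - Y ω * A ω := by
        funext ω; ring
      rw [h, integral_sub intY intYA, EY, EYA]
      norm_num
    have E1A : ∫ ω, (1 - A ω) ∂P = 1/2 := by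
      rw [integral_sub (integrable_const 1) intA, integral_const, EA]
      simp
      norm_num
    rw [EYA, EY1A, E1A, EA]
    norm_num
  · -- benchmarking fails
    have h1 : 1 < Real.log 3 := by
      rw [Real.lt_log_iff_exp_lt (by norm_num : (0:ℝ) < 3)]
      calc Real.exp 1 < 2.7182818286 := Real.exp_one_lt_d9
      _ < 3 := by norm_num
    have h2 : Real.log 3 < 2 := by
      rw [Real.log_lt_iff_lt_exp (by norm_num : (0:ℝ) < 3)]
      have := Real.exp_one_gt_d9
      calc (3:ℝ) < 2.7182818283 * 2.7182818283 := by norm_num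
      _ < Real.exp 1 * Real.exp 1 := by
            exact mul_lt_mul' this.le this (by norm_num) (Real.exp_pos 1)
      _ = Real.exp 2 := by rw [← Real.exp_add]; norm_num
    intro hmem
    obtain ⟨hlo, _⟩ := hmem
    rw [abs_of_nonpos (by linarith)] at hlo
    linarith
end
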